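/- If a permutation w of the positive integers with only finitely many non-fixed points avoids the pattern 1432 (there are no a<b<c<d with w(a)<w(d)<w(c)<w(b)), then for every pipe dream D of w and every k ≥ 1, no ladder move of order k is applicable to D. -/

import Mathlib

/-- The simple transposition corresponding to the cell `(i, j)`, namely
`s_{i+j-1}`, swapping `i+j-1` and `i+j` (as a permutation of the positive integers). -/
def cellTrans (p : ℕ+ × ℕ+) : Equiv.Perm ℕ+ :=
  Equiv.swap (p.1 + p.2 - 1) (p.1 + p.2)

/-- Key used to order cells: rows increasing, and within a row, columns decreasing. -/
def cellKey (p : ℕ+ × ℕ+) : Lex (ℕ+ × ℕ+ᵒᵈ) :=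
  toLex (p.1, OrderDual.toDual p.2)

/-- The product of the simple transpositions `s_{i+j-1}` over the cells `(i,j)` of `D`,
taken with `i` increasing and, for fixed `i`, `j` decreasing. -/
def pdWord (D : Finset (ℕ+ × ℕ+)) : Equiv.Perm ℕ+ :=
  (((D.image cellKey).sort (· ≤ ·)).map
    (fun q => cellTrans ((ofLex q).1, OrderDual.ofDual (ofLex q).2))).prod

/-- The number of inversions of a permutation of the positive integers. -/
noncomputable def invNum (w : Equiv.Perm ℕ+) : ℕ :=
  Set.ncard {p : ℕ+ × ℕ+ | p.1 < p.2 ∧ w p.2 < w p.1}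

/-- `D` is a pipe dream (RC-graph) of `w`. -/
def IsPipeDream (w : Equiv.Perm ℕ+) (D : Finset (ℕ+ × ℕ+)) : Prop :=
  D.card = invNum w ∧ pdWord D = w

/-- The number of pipe dreams of `w`. -/
noncomputable def nu (w : Equiv.Perm ℕ+) : ℕ :=
  Set.ncard {D : Finset (ℕ+ × ℕ+) | IsPipeDream w D}

/-- The number of occurrences of the pattern 132 in `w`. -/
noncomputable def p132 (w : Equiv.Perm ℕ+) : ℕ :=
  Set.ncard {t : ℕ+ × ℕ+ × ℕ+ |
    t.1 < t.2.1 ∧ t.2.1 < t.2.2 ∧ w t.1 < w t.2.2 ∧ w t.2.2 < w t.2.1}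

/-- The number of occurrences of the pattern 1432 in `w`. -/
noncomputable def p1432 (w : Equiv.Perm ℕ+) : ℕ :=
  Set.ncard {t : ℕ+ × ℕ+ × ℕ+ × ℕ+ |
    t.1 < t.2.1 ∧ t.2.1 < t.2.2.1 ∧ t.2.2.1 < t.2.2.2 ∧
    w t.1 < w t.2.2.2 ∧ w t.2.2.2 < w t.2.2.1 ∧ w t.2.2.1 < w t.2.1}

/-- `w` avoids the pattern 1432. -/
def Avoids1432 (w : Equiv.Perm ℕ+) : Prop :=
  ¬ ∃ a b c d : ℕ+, a < b ∧ b < c ∧ c < d ∧ w a < w d ∧ w d < w c ∧ w c < w b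

/-- The Rothe diagram of `w`. -/
def RD (w : Equiv.Perm ℕ+) : Set (ℕ+ × ℕ+) :=
  {p | p.2 < w p.1 ∧ p.1 < w⁻¹ p.2}

/-- The Lehmer code of `w`: `code(w)_i = #{j > i : w(j) < w(i)}`. -/
noncomputable def lehmer (w : Equiv.Perm ℕ+) (i : ℕ+) : ℕ :=
  Set.ncard {j : ℕ+ | i < j ∧ w j < w i}

/-- The bottom pipe dream `B_w = {(i,j) : 1 ≤ j ≤ code(w)_i}` (as a set of cells). -/
def bottomSet (w : Equiv.Perm ℕ+) : Set (ℕ+ × ℕ+) :=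
  {p | (p.2 : ℕ) ≤ lehmer w p.1}

/-- The top pipe dream `T_w = {(i,j) : 1 ≤ i ≤ code(w⁻¹)_j}` (as a set of cells). -/
def topSet (w : Equiv.Perm ℕ+) : Set (ℕ+ × ℕ+) :=
  {p | (p.1 : ℕ) ≤ lehmer w⁻¹ p.2}

/-- `α(S)_m`: the number of cells of `S` on the diagonal `{(i,j) : i + j - 1 = m}`. -/
noncomputable def diagCount (S : Set (ℕ+ × ℕ+)) : ℕ+ → ℕ :=
  fun m => Set.ncard {p | p ∈ S ∧ p.1 + p.2 = m + 1}

/-- Ladder move of order `k` taking `D` to `D'`: writing `i = i₀ + k + 1` (so `i₀ = i - k - 1`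
and automatically `i ≥ k + 2`), it requires `(i,j) ∈ D`, `(i,j+1) ∉ D`, `(i₀,j) ∉ D`,
`(i₀,j+1) ∉ D`, and `(i',j), (i',j+1) ∈ D` for all `i - k ≤ i' < i`; it removes `(i,j)` and
adds `(i₀, j+1)`. -/
def LadderMove (k : ℕ) (D D' : Finset (ℕ+ × ℕ+)) : Prop :=
  ∃ i₀ j : ℕ+,
    (i₀ + k.succPNat, j) ∈ D ∧
    (i₀ + k.succPNat, j + 1) ∉ D ∧
    (i₀, j) ∉ D ∧
    (i₀, j + 1) ∉ D ∧
    (∀ i' : ℕ+, i₀ < i' → i' < i₀ + k.succPNat → (i', j) ∈ D ∧ (i', j + 1) ∈ D) ∧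
    D' = insert (i₀, j + 1) (D.erase (i₀ + k.succPNat, j))



open Equiv

abbrev Cell := ℕ+ × ℕ+

def letterC (c : Cell) : ℕ+ := c.1 + c.2 - 1

lemma letterC_coe (c : Cell) : (letterC c : ℕ) = (c.1 : ℕ) + (c.2 : ℕ) - 1 := by
  have h1 : (1:ℕ+) < c.1 + c.2 := by
    rw [← PNat.coe_lt_coe]
    have := c.1.pos; have := c.2.pos
    push_cast; omega
  unfold letterC
  rw [PNat.sub_coe, if_pos h1]
  push_cast; ring

lemma letterC_add_one (c : Cell) : letterC c + 1 = c.1 + c.2 := by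
  apply PNat.coe_injective
  push_cast [letterC_coe]
  have := c.1.pos
  omega

lemma cellTrans_eq (c : Cell) : cellTrans c = Equiv.swap (letterC c) (letterC c + 1) := by
  rw [letterC_add_one]; rfl

lemma letterC_ge_row (c : Cell) : (c.1 : ℕ) ≤ (letterC c : ℕ) := by
  rw [letterC_coe]; have := c.2.pos; omega

/-- swap (n, n+1) preserves order away from the pair -/
lemma swap_lt_iff {n u v : ℕ+} (h1 : ¬(u = n ∧ v = n+1)) (h2 : ¬(u = n+1 ∧ v = n)) :
    Equiv.swap n (n+1) u < Equiv.swap n (n+1) v ↔ u < v := by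
  have key : ∀ x : ℕ+, Equiv.swap n (n+1) x = if x = n then n+1 else if x = n+1 then n else x := by
    intro x
    rcases eq_or_ne x n with rfl|hx
    · simp [Equiv.swap_apply_left]
    rcases eq_or_ne x (n+1) with rfl|hx2
    · simp [Equiv.swap_apply_right, hx]
    · simp [Equiv.swap_apply_of_ne_of_ne hx hx2, hx, hx2]
  have e : ∀ a b : ℕ+, a = b ↔ (a:ℕ) = (b:ℕ) := fun a b => ⟨congrArg _, fun h => PNat.coe_injective h⟩
  rw [key u, key v, ← PNat.coe_lt_coe, ← PNat.coe_lt_coe u v]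
  simp only [e] at h1 h2 ⊢
  split_ifs <;> push_cast at * <;> omega

-- continuing: InvS machinery
open Equiv

def InvS (σ : Perm ℕ+) : Set (ℕ+ × ℕ+) := {p | p.1 < p.2 ∧ σ p.2 < σ p.1}

lemma invS_finite {σ : Perm ℕ+} (h : {x : ℕ+ | σ x ≠ x}.Finite) : (InvS σ).Finite := by
  rcases h.bddAbove with ⟨M, hM⟩
  have hfix : ∀ x : ℕ+, M < x → σ x = x := by
    intro x hx
    by_contra hne
    exact absurd (hM (by exact hne)) (not_le.mpr hx)
  have hsub : InvS σ ⊆ Set.Iic M ×ˢ Set.Iic M := by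
    rintro ⟨a,b⟩ ⟨hab, hord⟩
    simp only [Set.mem_prod, Set.mem_Iic]
    have hb : b ≤ M := by
      by_contra hbM
      push_neg at hbM
      have hσb : σ b = b := hfix b hbM
      have haM : a ≤ M := by
        by_contra haM
        push_neg at haM
        have : σ a = a := hfix a haM
        rw [this, hσb] at hord
        exact absurd hab (not_lt.mpr hord.le)
      have hσaM : M < σ a := by rw [hσb] at hord; exact lt_trans hbM hord
      have h5 : σ (σ a) = σ a := hfix _ hσaM
      have h6 : σ a = a := σ.injective h5
      rw [h6, hσb] at hord
      exact absurd hab (not_lt.mpr hord.le)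
    exact ⟨le_trans hab.le hb, hb⟩
  apply Set.Finite.subset _ hsub
  apply Set.Finite.prod <;>
  · apply Set.Finite.of_finite_image (f := fun n : ℕ+ => (n : ℕ))
    · apply Set.Finite.subset (Set.finite_Iic (M : ℕ))
      rintro x ⟨y, hy, rfl⟩
      exact PNat.coe_le_coe _ _ |>.mpr hy
    · exact fun a _ b _ h => PNat.coe_injective h

lemma pair_ne {σ : Perm ℕ+} (n : ℕ+) : σ⁻¹ n ≠ σ⁻¹ (n+1) := by
  intro h
  have := σ⁻¹.injective.eq_iff.mpr h  -- not needed; direct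
  have h2 : n = n + 1 := by
    have := congrArg σ h
    simpa using this
  exact absurd h2 (by
    intro h3
    have := congrArg (fun x : ℕ+ => (x:ℕ)) h3
    push_cast at this
    omega)

lemma invS_swap_pos {σ : Perm ℕ+} {n : ℕ+} (h : σ⁻¹ n < σ⁻¹ (n+1)) :
    InvS (Equiv.swap n (n+1) * σ) = insert (σ⁻¹ n, σ⁻¹ (n+1)) (InvS σ) := by
  ext ⟨a,b⟩
  simp only [InvS, Set.mem_setOf_eq, Set.mem_insert_iff, Perm.mul_apply, Prod.mk.injEq]
  constructor
  · rintro ⟨hab, hlt⟩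
    by_cases hpair : σ a = n ∧ σ b = n + 1
    · left
      exact ⟨by rw [← hpair.1]; simp, by rw [← hpair.2]; simp⟩
    · right
      refine ⟨hab, ?_⟩
      by_cases hpair2 : σ a = n + 1 ∧ σ b = n
      · -- then a = σ⁻¹(n+1), b = σ⁻¹ n, but σ⁻¹ n < σ⁻¹ (n+1) means b < a, contra hab
        exfalso
        have ha : a = σ⁻¹ (n+1) := by rw [← hpair2.1]; simp
        have hb : b = σ⁻¹ n := by rw [← hpair2.2]; simp
        rw [ha, hb] at hab
        exact absurd h (not_lt.mpr hab.le)
      · have := (swap_lt_iff (n := n) (u := σ b) (v := σ a) ?_ ?_).mp hlt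
        · exact this
        · intro ⟨h1, h2⟩; exact hpair2 ⟨h2, h1⟩
        · intro ⟨h1, h2⟩; exact hpair ⟨h2, h1⟩
  · rintro (⟨ha, hb⟩ | ⟨hab, hlt⟩)
    · subst ha; subst hb
      refine ⟨h, ?_⟩
      simp [Equiv.swap_apply_left, Equiv.swap_apply_right]
    · refine ⟨hab, ?_⟩
      by_cases hpair : σ a = n ∧ σ b = n + 1
      · -- (a,b) would be the pair, but then σ b < σ a fails since n < n+1
        exfalso
        rw [hpair.1, hpair.2] at hlt
        have : (n:ℕ) + 1 < n := by
          have := PNat.coe_lt_coe _ _ |>.mpr hlt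
          push_cast at this; omega
        omega
      · by_cases hpair2 : σ a = n + 1 ∧ σ b = n
        · exfalso
          have ha : a = σ⁻¹ (n+1) := by rw [← hpair2.1]; simp
          have hb : b = σ⁻¹ n := by rw [← hpair2.2]; simp
          rw [ha, hb] at hab
          exact absurd h (not_lt.mpr hab.le)
        · rw [swap_lt_iff ?_ ?_]
          · exact hlt
          · intro ⟨h1, h2⟩; exact hpair2 ⟨h2, h1⟩
          · intro ⟨h1, h2⟩; exact hpair ⟨h2, h1⟩

lemma invS_swap_neg {σ : Perm ℕ+} {n : ℕ+} (h : σ⁻¹ (n+1) < σ⁻¹ n) :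
    InvS (Equiv.swap n (n+1) * σ) = InvS σ \ {(σ⁻¹ (n+1), σ⁻¹ n)} := by
  -- use: swap n (n+1) * (swap n (n+1) * σ) = σ and invS_swap_pos on σ' := swap * σ
  set σ' := Equiv.swap n (n+1) * σ with hσ'
  have hinv : ∀ m : ℕ+, σ'⁻¹ m = σ⁻¹ (Equiv.swap n (n+1) m) := by
    intro m; rw [hσ']; simp [mul_inv_rev, Perm.mul_apply]
  have h1 : σ'⁻¹ n = σ⁻¹ (n+1) := by rw [hinv]; simp [Equiv.swap_apply_left]
  have h2 : σ'⁻¹ (n+1) = σ⁻¹ n := by rw [hinv]; simp [Equiv.swap_apply_right]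
  have hpos : σ'⁻¹ n < σ'⁻¹ (n+1) := by rw [h1, h2]; exact h
  have hback : Equiv.swap n (n+1) * σ' = σ := by
    rw [hσ', ← mul_assoc, Equiv.swap_mul_self, one_mul]
  have := invS_swap_pos (σ := σ') hpos
  rw [hback, h1, h2] at this
  rw [this]
  ext p
  simp only [Set.mem_diff, Set.mem_insert_iff, Set.mem_singleton_iff]
  constructor
  · intro hp
    refine ⟨Or.inr hp, ?_⟩
    rintro rfl
    -- (σ⁻¹(n+1), σ⁻¹ n) ∈ InvS σ' would mean σ' of them inverted; but σ' swaps
    obtain ⟨hlt, hord⟩ := hp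
    have e1 : σ' (σ⁻¹ (n+1)) = n := by rw [hσ']; simp [Perm.mul_apply, Equiv.swap_apply_right]
    have e2 : σ' (σ⁻¹ n) = n + 1 := by rw [hσ']; simp [Perm.mul_apply, Equiv.swap_apply_left]
    simp only [e1, e2] at hord
    have := PNat.coe_lt_coe _ _ |>.mpr hord
    push_cast at this; omega
  · rintro ⟨hor, hne⟩
    rcases hor with heq | hp
    · exact absurd heq hne
    · exact hp

-- Stage 3: word products and tightness
open Equiv

noncomputable def invN (σ : Perm ℕ+) : ℕ := (InvS σ).ncard

def wp (l : List Cell) : Perm ℕ+ := (l.map cellTrans).prod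

@[simp] lemma wp_nil : wp [] = 1 := rfl

lemma wp_cons (c : Cell) (l : List Cell) : wp (c :: l) = cellTrans c * wp l := by
  simp [wp]

lemma wp_append (l₁ l₂ : List Cell) : wp (l₁ ++ l₂) = wp l₁ * wp l₂ := by
  simp [wp]

lemma wp_moved_finite (l : List Cell) : {x : ℕ+ | wp l x ≠ x}.Finite := by
  induction l with
  | nil => simp [wp]
  | cons c l ih =>
    apply Set.Finite.subset (Set.Finite.union ih ((Set.finite_singleton (letterC c + 1)).insert (letterC c)))
    intro x hx
    simp only [Set.mem_setOf_eq, wp_cons, Perm.mul_apply] at hx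
    by_cases h : wp l x = x
    · rw [h] at hx
      right
      rw [cellTrans_eq] at hx
      simp only [Set.mem_insert_iff, Set.mem_singleton_iff]
      by_contra hcon
      push_neg at hcon
      exact hx (Equiv.swap_apply_of_ne_of_ne hcon.1 hcon.2)
    · exact Or.inl h

lemma invS_wp_finite (l : List Cell) : (InvS (wp l)).Finite := invS_finite (wp_moved_finite l)

lemma invN_cons_pos {c : Cell} {l : List Cell} (h : (wp l)⁻¹ (letterC c) < (wp l)⁻¹ (letterC c + 1)) :
    invN (wp (c :: l)) = invN (wp l) + 1 := by
  rw [wp_cons, cellTrans_eq, invN, invS_swap_pos h]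
  have hnm : ((wp l)⁻¹ (letterC c), (wp l)⁻¹ (letterC c + 1)) ∉ InvS (wp l) := by
    rintro ⟨h1, h2⟩
    simp only [← Perm.mul_apply, mul_inv_cancel, Perm.one_apply] at h2
    have := PNat.coe_lt_coe _ _ |>.mpr h2
    push_cast at this; omega
  rw [Set.ncard_insert_of_notMem hnm (invS_wp_finite l)]
  rfl

lemma invN_cons_neg {c : Cell} {l : List Cell} (h : (wp l)⁻¹ (letterC c + 1) < (wp l)⁻¹ (letterC c)) :
    invN (wp (c :: l)) + 1 = invN (wp l) := by
  rw [wp_cons, cellTrans_eq, invN, invS_swap_neg h]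
  apply Set.ncard_diff_singleton_add_one _ (invS_wp_finite l)
  exact ⟨h, by simp only [← Perm.mul_apply, mul_inv_cancel, Perm.one_apply]; rw [← PNat.coe_lt_coe]; push_cast; omega⟩

lemma invN_wp_le (l : List Cell) : invN (wp l) ≤ l.length := by
  induction l with
  | nil =>
    simp only [wp_nil, invN, List.length_nil, Nat.le_zero]
    convert Set.ncard_empty (ℕ+ × ℕ+)
    ext ⟨a, b⟩
    simp only [InvS, Set.mem_setOf_eq, Perm.one_apply, Set.mem_empty_iff_false, iff_false]
    rintro ⟨h1, h2⟩
    exact absurd h1 (not_lt.mpr h2.le)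
  | cons c l ih =>
    rcases lt_trichotomy ((wp l)⁻¹ (letterC c)) ((wp l)⁻¹ (letterC c + 1)) with h|h|h
    · rw [invN_cons_pos h]; simpa using ih
    · exact absurd h (pair_ne _)
    · have := invN_cons_neg h
      simp only [List.length_cons]
      omega

def TightL (l : List Cell) : Prop := invN (wp l) = l.length

lemma tightL_cons {c : Cell} {l : List Cell} (h : TightL (c :: l)) :
    TightL l ∧ (wp l)⁻¹ (letterC c) < (wp l)⁻¹ (letterC c + 1) ∧
      InvS (wp (c :: l)) = insert ((wp l)⁻¹ (letterC c), (wp l)⁻¹ (letterC c + 1)) (InvS (wp l)) := by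
  unfold TightL at h
  simp only [List.length_cons] at h
  rcases lt_trichotomy ((wp l)⁻¹ (letterC c)) ((wp l)⁻¹ (letterC c + 1)) with hlt|heq|hgt
  · have hpos := invN_cons_pos (c := c) hlt
    have hle := invN_wp_le l
    refine ⟨by unfold TightL; omega, hlt, ?_⟩
    rw [wp_cons, cellTrans_eq, invS_swap_pos hlt]
  · exact absurd heq (pair_ne _)
  · exfalso
    have hneg := invN_cons_neg (c := c) hgt
    have hle := invN_wp_le l
    omega

lemma tightL_split {l : List Cell} (h : TightL l) :
    ∀ l₁ c l₂, l = l₁ ++ c :: l₂ →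
      (wp l₂)⁻¹ (letterC c) < (wp l₂)⁻¹ (letterC c + 1) ∧
      ((wp l₂)⁻¹ (letterC c), (wp l₂)⁻¹ (letterC c + 1)) ∈ InvS (wp l) := by
  induction l with
  | nil => intro l₁ c l₂ heq; exact absurd heq (by simp)
  | cons hd tl ih =>
    intro l₁ c l₂ heq
    obtain ⟨htl, hlt, hins⟩ := tightL_cons h
    cases l₁ with
    | nil =>
      simp only [List.nil_append, List.cons.injEq] at heq
      obtain ⟨rfl, rfl⟩ := heq
      exact ⟨hlt, by rw [hins]; exact Set.mem_insert _ _⟩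
    | cons hd' tl' =>
      simp only [List.cons_append, List.cons.injEq] at heq
      obtain ⟨rfl, heq2⟩ := heq
      obtain ⟨h1, h2⟩ := ih htl tl' c l₂ heq2
      exact ⟨h1, by rw [hins]; exact Set.mem_insert_of_mem _ h2⟩

lemma tightL_exists_split {l : List Cell} (h : TightL l) :
    ∀ pr ∈ InvS (wp l), ∃ l₁ c l₂, l = l₁ ++ c :: l₂ ∧
      pr = ((wp l₂)⁻¹ (letterC c), (wp l₂)⁻¹ (letterC c + 1)) := by
  induction l with
  | nil =>
    intro pr hpr
    exfalso
    obtain ⟨h1, h2⟩ := hpr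
    simp only [wp_nil, Perm.one_apply] at h2
    exact absurd h1 (not_lt.mpr h2.le)
  | cons hd tl ih =>
    intro pr hpr
    obtain ⟨htl, hlt, hins⟩ := tightL_cons h
    rw [hins] at hpr
    rcases hpr with heq | hmem
    · exact ⟨[], hd, tl, rfl, heq⟩
    · obtain ⟨l₁, c, l₂, heq, hpr⟩ := ih htl pr hmem
      exact ⟨hd :: l₁, c, l₂, by rw [heq]; rfl, hpr⟩

-- Stage 4: sorted cell lists and filters
open Equiv

def unkey (q : Lex (ℕ+ × ℕ+ᵒᵈ)) : Cell := ((ofLex q).1, OrderDual.ofDual (ofLex q).2)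

@[simp] lemma unkey_cellKey (c : Cell) : unkey (cellKey c) = c := rfl
@[simp] lemma cellKey_unkey (q : Lex (ℕ+ × ℕ+ᵒᵈ)) : cellKey (unkey q) = q := rfl

lemma cellKey_injective : Function.Injective cellKey := by
  intro a b h
  have := congrArg unkey h
  simpa using this

lemma cellKey_le_iff (a b : Cell) : cellKey a ≤ cellKey b ↔ (a.1 < b.1 ∨ (a.1 = b.1 ∧ b.2 ≤ a.2)) := by
  exact Prod.Lex.le_iff

lemma cellKey_lt_iff (a b : Cell) : cellKey a < cellKey b ↔ (a.1 < b.1 ∨ (a.1 = b.1 ∧ b.2 < a.2)) := by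
  exact Prod.Lex.lt_iff

noncomputable def cellsL (D : Finset Cell) : List Cell := ((D.image cellKey).sort (· ≤ ·)).map unkey

lemma mem_cellsL {D : Finset Cell} {c : Cell} : c ∈ cellsL D ↔ c ∈ D := by
  simp only [cellsL, List.mem_map, Finset.mem_sort, Finset.mem_image]
  constructor
  · rintro ⟨q, ⟨c', hc', rfl⟩, rfl⟩
    simpa using hc'
  · intro hc
    exact ⟨cellKey c, ⟨c, hc, rfl⟩, by simp⟩

lemma pairwise_cellsL (D : Finset Cell) :
    (cellsL D).Pairwise (fun a b => cellKey a < cellKey b) := by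
  have h := (Finset.sortedLT_sort (D.image cellKey)).pairwise
  have h2 : ((D.image cellKey).sort (· ≤ ·)).Pairwise (· < ·) := h
  exact List.Pairwise.map unkey (fun a b hab => by simpa using hab) h2

lemma nodup_cellsL (D : Finset Cell) : (cellsL D).Nodup := by
  apply List.Pairwise.imp _ (pairwise_cellsL D)
  intro a b hab
  intro h
  rw [h] at hab
  exact lt_irrefl _ hab

lemma length_cellsL (D : Finset Cell) : (cellsL D).length = D.card := by
  rw [cellsL, List.length_map, Finset.length_sort, Finset.card_image_of_injective _ cellKey_injective]

lemma pdWord_eq_wp (D : Finset Cell) : pdWord D = wp (cellsL D) := by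
  rw [pdWord, wp, cellsL, List.map_map]
  rfl

section FilterSplit

variable {P Q : Cell → Prop} [DecidablePred P] [DecidablePred Q]

lemma filter_split {l : List Cell} (hl : l.Pairwise (fun a b => cellKey a < cellKey b))
    (hup : ∀ a b : Cell, cellKey a ≤ cellKey b → P a → P b) :
    l = l.filter (fun c => decide (¬ P c)) ++ l.filter (fun c => decide (P c)) := by
  induction l with
  | nil => rfl
  | cons c l ih =>
    rcases List.pairwise_cons.mp hl with ⟨hc, hl'⟩
    by_cases hPc : P c
    · have hall : ∀ b ∈ l, P b := fun b hb => hup c b (le_of_lt (hc b hb)) hPc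
      have h1 : l.filter (fun c => decide (¬ P c)) = [] := by
        rw [List.filter_eq_nil_iff]
        intro a ha
        simpa using hall a ha
      have h2 : (c :: l).filter (fun c => decide (P c)) = c :: l := by
        rw [List.filter_eq_self]
        intro a ha
        rcases List.mem_cons.mp ha with rfl | ha'
        · simpa using hPc
        · simpa using hall a ha'
      rw [List.filter_cons_of_neg (by simpa using hPc), h1, h2]
      rfl
    · rw [List.filter_cons_of_pos (by simpa using hPc), List.filter_cons_of_neg (by simpa using hPc)]
      rw [List.cons_append]
      congr 1
      exact ih hl'

lemma filter_split2 {l : List Cell} (hl : l.Pairwise (fun a b => cellKey a < cellKey b))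
    (hupQ : ∀ a b : Cell, cellKey a ≤ cellKey b → Q a → Q b)
    (hQP : ∀ c, Q c → P c) :
    l.filter (fun c => decide (P c)) =
      l.filter (fun c => decide (P c ∧ ¬ Q c)) ++ l.filter (fun c => decide (Q c)) := by
  have hl' : (l.filter (fun c => decide (P c))).Pairwise (fun a b => cellKey a < cellKey b) :=
    List.Pairwise.sublist List.filter_sublist hl
  have h := filter_split (P := Q) hl' hupQ
  rw [List.filter_filter, List.filter_filter] at h
  rw [h]
  congr 1
  · apply List.filter_congr
    intro a _
    by_cases hP : P a <;> by_cases hQ : Q a <;>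
      first
        | exact absurd (hQP a hQ) hP
        | simp [hP, hQ]
  · apply List.filter_congr
    intro a _
    by_cases hP : P a <;> by_cases hQ : Q a <;>
      first
        | exact absurd (hQP a hQ) hP
        | simp [hP, hQ]

end FilterSplit

-- Stage 7: predicates and generic fix lemmas
open Equiv

def rowGE (m : ℕ+) : Cell → Prop := fun c => m ≤ c.1
def keyGT (t : Cell) : Cell → Prop := fun c => cellKey t < cellKey c
def keyGE (t : Cell) : Cell → Prop := fun c => cellKey t ≤ cellKey c

instance (m : ℕ+) : DecidablePred (rowGE m) := fun c => inferInstanceAs (Decidable (m ≤ c.1))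
instance (t : Cell) : DecidablePred (keyGT t) := fun c => inferInstanceAs (Decidable (cellKey t < cellKey c))
instance (t : Cell) : DecidablePred (keyGE t) := fun c => inferInstanceAs (Decidable (cellKey t ≤ cellKey c))

lemma up_rowGE (m : ℕ+) : ∀ a b : Cell, cellKey a ≤ cellKey b → rowGE m a → rowGE m b := by
  intro a b hab h
  rcases (cellKey_le_iff a b).mp hab with h1 | ⟨h1, _⟩
  · exact le_trans h (le_of_lt h1)
  · exact le_trans h (le_of_eq h1)

lemma up_keyGT (t : Cell) : ∀ a b : Cell, cellKey a ≤ cellKey b → keyGT t a → keyGT t b :=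
  fun a b hab h => lt_of_lt_of_le h hab

lemma up_keyGE (t : Cell) : ∀ a b : Cell, cellKey a ≤ cellKey b → keyGE t a → keyGE t b :=
  fun a b hab h => le_trans h hab

lemma keyGT_coe {t c : Cell} : keyGT t c ↔
    ((t.1:ℕ) < (c.1:ℕ) ∨ ((t.1:ℕ) = (c.1:ℕ) ∧ (c.2:ℕ) < (t.2:ℕ))) := by
  rw [keyGT, cellKey_lt_iff]
  rw [← PNat.coe_lt_coe, ← PNat.coe_lt_coe]
  constructor
  · rintro (h | ⟨h1, h2⟩)
    · exact Or.inl h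
    · exact Or.inr ⟨by rw [h1], h2⟩
  · rintro (h | ⟨h1, h2⟩)
    · exact Or.inl h
    · exact Or.inr ⟨PNat.coe_injective h1, h2⟩

lemma keyGE_coe {t c : Cell} : keyGE t c ↔
    ((t.1:ℕ) < (c.1:ℕ) ∨ ((t.1:ℕ) = (c.1:ℕ) ∧ (c.2:ℕ) ≤ (t.2:ℕ))) := by
  rw [keyGE, cellKey_le_iff]
  rw [← PNat.coe_lt_coe]
  constructor
  · rintro (h | ⟨h1, h2⟩)
    · exact Or.inl h
    · exact Or.inr ⟨by rw [h1], PNat.coe_le_coe _ _ |>.mpr h2⟩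
  · rintro (h | ⟨h1, h2⟩)
    · exact Or.inl h
    · exact Or.inr ⟨PNat.coe_injective h1, PNat.coe_le_coe _ _ |>.mp h2⟩

lemma rowGE_coe {m : ℕ+} {c : Cell} : rowGE m c ↔ (m:ℕ) ≤ (c.1:ℕ) :=
  (PNat.coe_le_coe _ _).symm

lemma cellTrans_fix {c : Cell} {u : ℕ+} (h1 : (u:ℕ) ≠ (letterC c : ℕ))
    (h2 : (u:ℕ) ≠ (letterC c : ℕ) + 1) : cellTrans c u = u := by
  rw [cellTrans_eq]
  apply Equiv.swap_apply_of_ne_of_ne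
  · intro h; exact h1 (by rw [h])
  · intro h
    apply h2
    rw [h]; push_cast; ring

lemma cellTrans_fix' {c : Cell} {u : ℕ+}
    (h : (u:ℕ) + 1 ≤ (c.1:ℕ) + (c.2:ℕ) - 1 ∨ (c.1:ℕ) + (c.2:ℕ) + 1 ≤ (u:ℕ)) :
    cellTrans c u = u := by
  have hc1 := c.1.pos; have hc2 := c.2.pos
  apply cellTrans_fix <;> rw [letterC_coe] <;> omega

lemma cellTrans_apply_snd (c : Cell) : cellTrans c (letterC c + 1) = letterC c := by
  rw [cellTrans_eq]; exact Equiv.swap_apply_right _ _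

lemma cellTrans_inv (c : Cell) : (cellTrans c)⁻¹ = cellTrans c := by
  rw [cellTrans_eq]; exact Equiv.swap_inv _ _


lemma cellTrans_apply_fst (c : Cell) : cellTrans c (letterC c) = letterC c + 1 := by
  rw [cellTrans_eq]; exact Equiv.swap_apply_left _ _

lemma keyGT_coe' {t1 t2 : ℕ+} {c : Cell} : keyGT (t1, t2) c ↔
    ((t1:ℕ) < (c.1:ℕ) ∨ ((t1:ℕ) = (c.1:ℕ) ∧ (c.2:ℕ) < (t2:ℕ))) := keyGT_coe

lemma keyGE_coe' {t1 t2 : ℕ+} {c : Cell} : keyGE (t1, t2) c ↔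
    ((t1:ℕ) < (c.1:ℕ) ∨ ((t1:ℕ) = (c.1:ℕ) ∧ (c.2:ℕ) ≤ (t2:ℕ))) := keyGE_coe

lemma letterC_coe' (a b : ℕ+) : (letterC (a, b) : ℕ) = (a:ℕ) + (b:ℕ) - 1 := letterC_coe _

-- Stage 5
open Equiv

lemma filter_eq_singleton {l : List Cell} {P : Cell → Prop} [DecidablePred P] {x : Cell}
    (hl : l.Nodup) (hx : x ∈ l) (hPx : P x) (huniq : ∀ y ∈ l, P y → y = x) :
    l.filter (fun c => decide (P c)) = [x] := by
  induction l with
  | nil => exact absurd hx (by simp)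
  | cons hd tl ih =>
    rcases List.nodup_cons.mp hl with ⟨hnd1, hnd2⟩
    by_cases hPhd : P hd
    · have hhd : hd = x := huniq hd (by simp) hPhd
      subst hhd
      rw [List.filter_cons_of_pos (by simpa using hPhd)]
      have : tl.filter (fun c => decide (P c)) = [] := by
        rw [List.filter_eq_nil_iff]
        intro a ha hPa
        have : a = hd := huniq a (by simp [ha]) (by simpa using hPa)
        subst this
        exact hnd1 ha
      rw [this]
    · rw [List.filter_cons_of_neg (by simpa using hPhd)]
      have hx2 : x ∈ tl := by
        rcases List.mem_cons.mp hx with rfl | h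
        · exact absurd hPx hPhd
        · exact h
      exact ih hnd2 hx2 (fun y hy hPy => huniq y (by simp [hy]) hPy)

lemma wp_fix {l : List Cell} {u : ℕ+} (h : ∀ c ∈ l, cellTrans c u = u) : wp l u = u := by
  induction l with
  | nil => rfl
  | cons c l ih =>
    rw [wp_cons, Perm.mul_apply, ih (fun c hc => h c (by simp [hc]))]
    exact h c (by simp)

lemma perm_inv_fix {σ : Perm ℕ+} {u : ℕ+} (h : σ u = u) : σ⁻¹ u = u := by
  conv_lhs => rw [← h]
  simp

-- suffix product over cells of D satisfying P
noncomputable def sfx (D : Finset Cell) (P : Cell → Prop) [DecidablePred P] : Perm ℕ+ :=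
  wp ((cellsL D).filter (fun c => decide (P c)))

lemma sfx_split (D : Finset Cell) (P Q : Cell → Prop) [DecidablePred P] [DecidablePred Q]
    (hupQ : ∀ a b : Cell, cellKey a ≤ cellKey b → Q a → Q b)
    (hQP : ∀ c, Q c → P c) :
    sfx D P = wp ((cellsL D).filter (fun c => decide (P c ∧ ¬ Q c))) * sfx D Q := by
  rw [sfx, sfx, filter_split2 (pairwise_cellsL D) hupQ hQP, wp_append]

/-- evaluation: if all cells in `P \ Q` fix `u`, then `sfx P u = sfx Q u`. -/
lemma sfx_eval (D : Finset Cell) (P Q : Cell → Prop) [DecidablePred P] [DecidablePred Q]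
    (hupQ : ∀ a b : Cell, cellKey a ≤ cellKey b → Q a → Q b)
    (hQP : ∀ c, Q c → P c) (u : ℕ+)
    (hfix : ∀ c ∈ D, P c → ¬ Q c → cellTrans c (sfx D Q u) = sfx D Q u) :
    sfx D P u = sfx D Q u := by
  rw [sfx_split D P Q hupQ hQP, Perm.mul_apply]
  apply wp_fix
  intro c hc
  rw [List.mem_filter] at hc
  obtain ⟨hc1, hc2⟩ := hc
  simp only [decide_eq_true_eq] at hc2
  exact hfix c (mem_cellsL.mp hc1) hc2.1 hc2.2

/-- canonical split of the sorted cell list at a cell c ∈ D -/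
lemma cells_split_at {D : Finset Cell} {c : Cell} (hc : c ∈ D) :
    cellsL D = (cellsL D).filter (fun x => decide (¬ keyGE c x)) ++
      c :: (cellsL D).filter (fun x => decide (keyGT c x)) := by
  have h1 := filter_split (P := keyGE c) (pairwise_cellsL D) (up_keyGE c)
  have h2 := filter_split2 (P := keyGE c)
    (Q := keyGT c) (pairwise_cellsL D)
    (up_keyGT c) (fun x h => le_of_lt h)
  have h3 : (cellsL D).filter (fun x => decide (keyGE c x ∧ ¬ keyGT c x)) = [c] := by
    apply filter_eq_singleton (nodup_cellsL D) (mem_cellsL.mpr hc)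
    · exact ⟨le_refl _, lt_irrefl _⟩
    · intro y _ ⟨hy1, hy2⟩
      have : cellKey c = cellKey y := le_antisymm hy1 (not_lt.mp hy2)
      exact (cellKey_injective this).symm
  rw [h3] at h2
  conv_lhs => rw [h1, h2]
  rfl

-- Stage 6: reducedness facts at cells
open Equiv

/-- the suffix permutation strictly after cell c -/
noncomputable def sfxAt (D : Finset Cell) (c : Cell) : Perm ℕ+ :=
  sfx D (keyGT c)

lemma split_suffix_eq {D : Finset Cell} {l₁ l₂ : List Cell} {c : Cell}
    (h : cellsL D = l₁ ++ c :: l₂) :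
    l₂ = (cellsL D).filter (fun x => decide (keyGT c x)) := by
  have hpw := pairwise_cellsL D
  rw [h] at hpw
  rw [List.pairwise_append] at hpw
  obtain ⟨hpw1, hpw2, hR⟩ := hpw
  rcases List.pairwise_cons.mp hpw2 with ⟨hc2, hpw3⟩
  rw [h, List.filter_append, List.filter_cons_of_neg (by simp [keyGT])]
  have e1 : l₁.filter (fun x => decide (keyGT c x)) = [] := by
    rw [List.filter_eq_nil_iff]
    intro a ha
    have : cellKey a < cellKey c := hR a ha c (by simp)
    simp only [decide_eq_true_eq, keyGT]
    exact fun h => (not_lt.mpr (le_of_lt this)) (of_decide_eq_true h)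
  have e2 : l₂.filter (fun x => decide (keyGT c x)) = l₂ := by
    rw [List.filter_eq_self]
    intro a ha
    exact decide_eq_true (hc2 a ha)
  rw [e1, e2, List.nil_append]

lemma fact_at_cell {D : Finset Cell} (ht : TightL (cellsL D)) {c : Cell} (hc : c ∈ D) :
    (sfxAt D c)⁻¹ (letterC c) < (sfxAt D c)⁻¹ (letterC c + 1) ∧
    ((sfxAt D c)⁻¹ (letterC c), (sfxAt D c)⁻¹ (letterC c + 1)) ∈ InvS (wp (cellsL D)) := by
  have hsplit := cells_split_at hc
  exact tightL_split ht _ c _ hsplit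

lemma inv_realized {D : Finset Cell} (ht : TightL (cellsL D)) {pr : ℕ+ × ℕ+}
    (hpr : pr ∈ InvS (wp (cellsL D))) :
    ∃ c ∈ D, pr = ((sfxAt D c)⁻¹ (letterC c), (sfxAt D c)⁻¹ (letterC c + 1)) := by
  obtain ⟨l₁, c, l₂, heq, hpr2⟩ := tightL_exists_split ht pr hpr
  refine ⟨c, ?_, ?_⟩
  · rw [← mem_cellsL, heq]
    simp
  · rw [hpr2, sfxAt, sfx, ← split_suffix_eq heq]

-- Stage 7b
open Equiv

lemma sfx_keyGT_fix {D : Finset Cell} {t : Cell} {u : ℕ+} (h : (u:ℕ) < (t.1:ℕ)) :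
    sfx D (keyGT t) u = u := by
  apply wp_fix
  intro c hc
  rw [List.mem_filter] at hc
  have hkey : keyGT t c := by simpa using hc.2
  rcases keyGT_coe.mp hkey with h1 | ⟨h1, _⟩ <;>
  · apply cellTrans_fix'
    left
    have := c.2.pos
    omega

lemma sfx_rowGE_fix {D : Finset Cell} {m : ℕ+} {u : ℕ+} (h : (u:ℕ) < (m:ℕ)) :
    sfx D (rowGE m) u = u := by
  apply wp_fix
  intro c hc
  rw [List.mem_filter] at hc
  have hrow : rowGE m c := by simpa using hc.2
  rw [rowGE_coe] at hrow
  apply cellTrans_fix'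
  left
  have := c.2.pos
  omega

lemma sfx_single (D : Finset Cell) (P Q : Cell → Prop) [DecidablePred P] [DecidablePred Q]
    (hupQ : ∀ a b : Cell, cellKey a ≤ cellKey b → Q a → Q b)
    (hQP : ∀ c, Q c → P c) (x : Cell) (hx : x ∈ D) (hPx : P x) (hQx : ¬ Q x)
    (huniq : ∀ y ∈ D, P y → ¬ Q y → y = x) :
    sfx D P = cellTrans x * sfx D Q := by
  rw [sfx_split D P Q hupQ hQP]
  congr 1
  rw [filter_eq_singleton (nodup_cellsL D) (mem_cellsL.mpr hx) ⟨hPx, hQx⟩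
    (fun y hy hPy => huniq y (mem_cellsL.mp hy) hPy.1 hPy.2)]
  simp [wp]

lemma cell_ext_coe {a b : Cell} (h1 : (a.1:ℕ) = (b.1:ℕ)) (h2 : (a.2:ℕ) = (b.2:ℕ)) : a = b :=
  Prod.ext (PNat.coe_injective h1) (PNat.coe_injective h2)

-- Stage 8: main configuration lemma
open Equiv

-- helper: two inversions (a,Y), (a',Y) realized in the same row are impossible
lemma same_row_contra {D : Finset Cell} {c c' : Cell} {Y' : ℕ+}
    (hc : c ∈ D)
    (h1 : (c.1:ℕ) = (c'.1:ℕ)) (h2 : (c.2:ℕ) < (c'.2:ℕ))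
    (hcY : sfxAt D c Y' = letterC c + 1)
    (hcY' : sfxAt D c' Y' = letterC c' + 1) : False := by
  have hklt : cellKey c' < cellKey c := by
    apply (cellKey_lt_iff _ _).mpr
    right
    refine ⟨PNat.coe_injective h1.symm, ?_⟩
    rw [← PNat.coe_lt_coe]
    exact h2
  have eS : sfx D (keyGE c) = cellTrans c * sfx D (keyGT c) := by
    apply sfx_single D _ _ (up_keyGT _) (fun x h => le_of_lt h) c hc (le_refl _) (lt_irrefl _)
    intro y _ hP hQ
    exact (cellKey_injective (le_antisymm hP (not_lt.mp hQ))).symm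
  have eSY : sfx D (keyGE c) Y' = letterC c := by
    rw [eS, Perm.mul_apply]
    have : sfx D (keyGT c) Y' = letterC c + 1 := hcY
    rw [this, cellTrans_apply_snd]
  have eFin : sfx D (keyGT c') Y' = letterC c := by
    rw [← eSY]
    apply sfx_eval D _ _ (up_keyGE _) (fun x h => lt_of_lt_of_le hklt h)
    intro x hxD hP hQ
    rw [eSY]
    have hP' := keyGT_coe.mp hP
    have hQ' : ¬ ((c.1:ℕ) < (x.1:ℕ) ∨ ((c.1:ℕ) = (x.1:ℕ) ∧ (x.2:ℕ) ≤ (c.2:ℕ))) := by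
      intro hcon; exact hQ (keyGE_coe.mpr hcon)
    push_neg at hQ'
    apply cellTrans_fix'
    rw [letterC_coe]
    have := c.2.pos
    have := c.1.pos
    rcases hP' with hh | ⟨hh1, hh2⟩ <;> omega
  have : sfxAt D c' Y' = letterC c := eFin
  rw [hcY'] at this
  have hcoe : ((letterC c' + 1 : ℕ+):ℕ) = (letterC c : ℕ) :=
    congrArg (fun x : ℕ+ => (x:ℕ)) this
  push_cast [letterC_coe] at hcoe
  have := c.2.pos
  have := c'.2.pos
  omega

set_option maxHeartbeats 1000000 in
lemma main_aux (D : Finset Cell) (ht : TightL (cellsL D))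
    (i₀ j : ℕ+) (k : ℕ) (hk : 1 ≤ k)
    (h1 : ((i₀ + k.succPNat, j) : Cell) ∈ D) (h2 : ((i₀ + k.succPNat, j+1) : Cell) ∉ D)
    (h3 : ((i₀, j) : Cell) ∉ D) (h4 : ((i₀, j+1) : Cell) ∉ D)
    (h5 : ∀ i' : ℕ+, i₀ < i' → i' < i₀ + k.succPNat → ((i', j):Cell) ∈ D ∧ ((i', j+1):Cell) ∈ D) :
    ∃ a b c d : ℕ+, a < b ∧ b < c ∧ c < d ∧
      wp (cellsL D) a < wp (cellsL D) d ∧ wp (cellsL D) d < wp (cellsL D) c ∧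
      wp (cellsL D) c < wp (cellsL D) b := by
  set W := wp (cellsL D) with hW
  set i : ℕ+ := i₀ + k.succPNat with hi
  have hicoe : (i:ℕ) = (i₀:ℕ) + k + 1 := by
    rw [hi]; push_cast [Nat.succPNat_coe]; omega
  set n : ℕ+ := letterC (i, j) with hn
  have hncoe : (n:ℕ) = (i₀:ℕ) + (j:ℕ) + k := by
    rw [hn, letterC_coe' i j, hicoe]
    have := j.pos
    omega
  have hj := j.pos
  have hi0 := i₀.pos
  -- σ1 and the pipes X, Y
  set σ1 : Perm ℕ+ := sfxAt D (i, j) with hσ1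
  set X : ℕ+ := σ1⁻¹ n with hX
  set Y : ℕ+ := σ1⁻¹ (n + 1) with hYdef
  obtain ⟨hXY, hXYinv⟩ := fact_at_cell ht h1
  rw [← hσ1] at hXY hXYinv
  have hσ1X : σ1 X = n := by rw [hX]; simp
  have hσ1Y : σ1 Y = n + 1 := by rw [hYdef]; simp
  -- letter of (i,j) is n : had better record it
  have hlij : letterC ((i, j) : Cell) = n := rfl
  rw [hlij] at hXY hXYinv
  -- keyGE (i,j) step: sfx D (keyGE (i,j)) = cellTrans (i,j) * σ1
  have eB : sfx D (keyGE (i, j)) = cellTrans (i, j) * σ1 := by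
    apply sfx_single D (keyGE (i,j)) (keyGT (i,j)) (up_keyGT _) (fun c h => le_of_lt h)
      (i,j) h1 (le_refl _) (lt_irrefl _)
    intro y hy hP hQ
    have h1' := keyGE_coe'.mp hP
    rw [keyGT] at hQ
    have h2' : ¬ ((i:ℕ) < (y.1:ℕ) ∨ ((i:ℕ) = (y.1:ℕ) ∧ (y.2:ℕ) < (j:ℕ))) := by
      intro hcon; exact hQ (keyGT_coe'.mpr hcon)
    push_neg at h2'
    refine cell_ext_coe ?_ ?_
    · show (y.1:ℕ) = (i:ℕ)
      rcases h1' with hh | ⟨hh1, hh2⟩ <;> omega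
    · show (y.2:ℕ) = (j:ℕ)
      rcases h1' with hh | ⟨hh1, hh2⟩ <;> omega
  -- row i evaluation: sfx D (rowGE i) Y = n
  have eC : sfx D (rowGE i) Y = n := by
    have estep : sfx D (keyGE (i,j)) Y = n := by
      rw [eB, Perm.mul_apply, hσ1Y, ← hlij, cellTrans_apply_snd, hlij]
    rw [← estep]
    apply sfx_eval D (rowGE i) (keyGE (i,j)) (up_keyGE _)
    · intro c hc
      rcases keyGE_coe'.mp hc with hh | ⟨hh1, _⟩
      · exact rowGE_coe.mpr (le_of_lt hh)
      · exact rowGE_coe.mpr (le_of_eq hh1)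
    · intro c hcD hP hQ
      rw [estep]
      have hP' := rowGE_coe.mp hP
      have hQ' : ¬ ((i:ℕ) < (c.1:ℕ) ∨ ((i:ℕ) = (c.1:ℕ) ∧ (c.2:ℕ) ≤ (j:ℕ))) := by
        intro hcon; exact hQ (keyGE_coe'.mpr hcon)
      push_neg at hQ'
      have hc1 : (c.1:ℕ) = (i:ℕ) := le_antisymm hQ'.1 hP'
      have hc2 : (j:ℕ) < (c.2:ℕ) := by
        have := hQ'.2 hc1.symm
        omega
      -- c ≠ (i, j+1) so c.2 ≥ j+2
      have hne : (c.2:ℕ) ≠ (j:ℕ) + 1 := by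
        intro hcon
        apply h2
        have : c = ((i₀ + k.succPNat, j+1) : Cell) := by
          apply cell_ext_coe
          · rw [hc1, hi]
          · rw [hcon]; push_cast; ring
        rwa [this] at hcD
      apply cellTrans_fix'
      left
      omega
  set q : ℕ+ := letterC ((i₀, j) : Cell) with hq
  have hqcoe : (q:ℕ) = (i₀:ℕ) + (j:ℕ) - 1 := letterC_coe' i₀ j
  -- base of the invariant
  have base : sfx D (rowGE (i₀ + k.succPNat)) Y = q + k.succPNat := by
    rw [← hi]
    have : q + k.succPNat = n := by
      apply PNat.coe_injective
      push_cast [Nat.succPNat_coe, hqcoe, hncoe]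
      omega
    rw [this, eC]
  -- inductive step
  have step : ∀ d : ℕ, d + 1 ≤ k →
      sfx D (rowGE (i₀ + (d+1).succPNat)) Y = q + (d+1).succPNat →
      sfx D (rowGE (i₀ + d.succPNat)) Y = q + d.succPNat := by
    intro d hdk IH
    set r : ℕ+ := i₀ + d.succPNat with hr
    have hrcoe : (r:ℕ) = (i₀:ℕ) + d + 1 := by rw [hr]; push_cast [Nat.succPNat_coe]; omega
    have hrmid1 : i₀ < r := by rw [← PNat.coe_lt_coe]; omega
    have hrmid2 : r < i := by rw [← PNat.coe_lt_coe]; omega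
    obtain ⟨hrj, hrj1⟩ := h5 r hrmid1 hrmid2
    have hbnd : i₀ + (d+1).succPNat = r + 1 := by
      apply PNat.coe_injective; push_cast [Nat.succPNat_coe]; omega
    have hlr : (letterC ((r, j) : Cell) : ℕ) = (i₀:ℕ) + (j:ℕ) + d := by
      rw [letterC_coe' r j]; omega
    have hlr1 : (letterC ((r, j+1) : Cell) : ℕ) = (i₀:ℕ) + (j:ℕ) + d + 1 := by
      rw [letterC_coe' r (j+1)]; push_cast; omega
    have hu0 : ((q + (d+1).succPNat : ℕ+) : ℕ) = (i₀:ℕ) + (j:ℕ) + d + 1 := by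
      push_cast [Nat.succPNat_coe]; omega
    have e1 : sfx D (keyGT (r, j)) Y = q + (d+1).succPNat := by
      rw [← IH]
      apply sfx_eval D _ _ (up_rowGE _)
      · intro c hc
        have := rowGE_coe.mp hc
        rw [hbnd] at this
        apply keyGT_coe'.mpr
        left
        push_cast at this
        omega
      · intro c hcD hP hQ
        rw [IH]
        have hP' := keyGT_coe'.mp hP
        have hQ' : ¬ ((i₀:ℕ) + d + 2 ≤ (c.1:ℕ)) := by
          intro hcon
          apply hQ
          apply rowGE_coe.mpr
          push_cast [Nat.succPNat_coe]
          omega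
        apply cellTrans_fix'
        right
        rw [hu0]
        rcases hP' with hh | ⟨hh1, hh2⟩ <;> omega
    have e2 : sfx D (keyGE (r, j)) = cellTrans (r, j) * sfx D (keyGT (r, j)) := by
      apply sfx_single D _ _ (up_keyGT _) (fun c h => le_of_lt h) (r, j) hrj (le_refl _) (lt_irrefl _)
      intro y _ hP hQ
      have hP' := keyGE_coe'.mp hP
      have hQ' : ¬ ((r:ℕ) < (y.1:ℕ) ∨ ((r:ℕ) = (y.1:ℕ) ∧ (y.2:ℕ) < (j:ℕ))) := by
        intro hcon; exact hQ (keyGT_coe'.mpr hcon)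
      push_neg at hQ'
      refine cell_ext_coe ?_ ?_
      · show (y.1:ℕ) = (r:ℕ)
        rcases hP' with hh | ⟨hh1, hh2⟩ <;> omega
      · show (y.2:ℕ) = (j:ℕ)
        rcases hP' with hh | ⟨hh1, hh2⟩ <;> omega
    have hu0L : q + (d+1).succPNat = letterC ((r, j) : Cell) + 1 := by
      apply PNat.coe_injective; push_cast [hu0, hlr]; omega
    have e2' : sfx D (keyGE (r, j)) Y = letterC ((r, j) : Cell) := by
      rw [e2, Perm.mul_apply, e1, hu0L, cellTrans_apply_snd]
    have hkey_lt : cellKey ((r, j+1) : Cell) < cellKey ((r, j) : Cell) := by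
      apply (cellKey_lt_iff _ _).mpr
      right
      refine ⟨rfl, ?_⟩
      show j < j + 1
      rw [← PNat.coe_lt_coe]; push_cast; omega
    have e3 : sfx D (keyGE (r, j+1)) = cellTrans (r, j+1) * sfx D (keyGE (r, j)) := by
      apply sfx_single D _ _ (up_keyGE _)
        (fun c h => le_trans (le_of_lt hkey_lt) h) (r, j+1) hrj1 (le_refl _)
        (fun hcon => absurd hkey_lt (not_lt.mpr hcon))
      intro y _ hP hQ
      have hP' := keyGE_coe'.mp hP
      have hQ' : ¬ ((r:ℕ) < (y.1:ℕ) ∨ ((r:ℕ) = (y.1:ℕ) ∧ (y.2:ℕ) ≤ (j:ℕ))) := by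
        intro hcon; exact hQ (keyGE_coe'.mpr hcon)
      push_neg at hQ'
      push_cast at hP'
      refine cell_ext_coe ?_ ?_
      · show (y.1:ℕ) = (r:ℕ)
        rcases hP' with hh | ⟨hh1, hh2⟩ <;> omega
      · show (y.2:ℕ) = (j:ℕ) + 1
        rcases hP' with hh | ⟨hh1, hh2⟩ <;> omega
    have e3' : sfx D (keyGE (r, j+1)) Y = letterC ((r, j) : Cell) := by
      rw [e3, Perm.mul_apply, e2']
      apply cellTrans_fix'
      left
      push_cast [hlr]
      omega
    have e4 : sfx D (rowGE r) Y = letterC ((r, j) : Cell) := by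
      rw [← e3']
      apply sfx_eval D _ _ (up_keyGE _)
      · intro c hc
        apply rowGE_coe.mpr
        rcases keyGE_coe'.mp hc with hh | ⟨hh1, _⟩ <;> omega
      · intro c hcD hP hQ
        rw [e3']
        have hP' := rowGE_coe.mp hP
        have hQ' : ¬ ((r:ℕ) < (c.1:ℕ) ∨ ((r:ℕ) = (c.1:ℕ) ∧ (c.2:ℕ) ≤ (j:ℕ) + 1)) := by
          intro hcon
          apply hQ
          apply keyGE_coe'.mpr
          rcases hcon with hh | ⟨hh1, hh2⟩
          · exact Or.inl hh
          · right; push_cast; omega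
        push_neg at hQ'
        apply cellTrans_fix'
        left
        rw [hlr]
        omega
    rw [hr] at e4
    rw [e4]
    apply PNat.coe_injective
    push_cast [hlr, Nat.succPNat_coe, letterC_coe']
    omega
  -- downward induction
  have INVdown : ∀ m : ℕ, m ≤ k →
      sfx D (rowGE (i₀ + (k-m).succPNat)) Y = q + (k-m).succPNat := by
    intro m
    induction m with
    | zero => intro _; simpa using base
    | succ m ih =>
      intro hm
      have e : k - (m+1) + 1 = k - m := by omega
      have := step (k - (m+1)) (by omega) (by rw [e]; exact ih (by omega))
      exact this
  have INV0 : sfx D (rowGE (i₀ + (0:ℕ).succPNat)) Y = q + (0:ℕ).succPNat := by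
    have := INVdown k (le_refl k)
    simpa using this
  -- the middle row r_k = i₀ + k
  obtain ⟨κ, hkk⟩ : ∃ κ, k = κ + 1 := ⟨k-1, by omega⟩
  set rk : ℕ+ := i₀ + κ.succPNat with hrk
  have hrkcoe : (rk:ℕ) = (i₀:ℕ) + k := by rw [hrk]; push_cast [Nat.succPNat_coe]; omega
  have hrkmid1 : i₀ < rk := by rw [← PNat.coe_lt_coe]; omega
  have hrkmid2 : rk < i := by rw [← PNat.coe_lt_coe]; omega
  obtain ⟨hrkj, hrkj1⟩ := h5 rk hrkmid1 hrkmid2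
  set p0 : ℕ+ := letterC ((rk, j) : Cell) with hp0
  have hp0coe : (p0:ℕ) = (i₀:ℕ) + (j:ℕ) + k - 1 := by
    rw [hp0, letterC_coe' rk j]; omega
  have hp0n : p0 + 1 = n := by
    apply PNat.coe_injective; push_cast [hp0coe, hncoe]; omega
  set σ4 : Perm ℕ+ := sfxAt D (rk, j) with hσ4
  -- σ4 Y = n
  have hσ4Y : σ4 Y = n := by
    rw [hσ4, sfxAt, ← eC]
    apply sfx_eval D _ _ (up_rowGE _)
    · intro c hc
      apply keyGT_coe'.mpr
      left
      have := rowGE_coe.mp hc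
      omega
    · intro c hcD hP hQ
      rw [eC]
      have hP' := keyGT_coe'.mp hP
      have hQ' : ¬ ((i:ℕ) ≤ (c.1:ℕ)) := fun hcon => hQ (rowGE_coe.mpr hcon)
      apply cellTrans_fix'
      right
      rcases hP' with hh | ⟨hh1, hh2⟩ <;> omega
  have hσ4n : σ4⁻¹ n = Y := by rw [← hσ4Y]; simp
  obtain ⟨hF4lt, hF4inv⟩ := fact_at_cell ht hrkj
  rw [← hσ4] at hF4lt hF4inv
  have hlrk : letterC ((rk, j) : Cell) = p0 := rfl
  rw [hlrk, hp0n, hσ4n] at hF4lt hF4inv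
  set Z : ℕ+ := σ4⁻¹ p0 with hZ
  -- σ5 facts
  have hkey_lt2 : cellKey ((rk, j+1) : Cell) < cellKey ((rk, j) : Cell) := by
    apply (cellKey_lt_iff _ _).mpr
    right
    refine ⟨rfl, ?_⟩
    show j < j + 1
    rw [← PNat.coe_lt_coe]; push_cast; omega
  have e5 : sfx D (keyGT (rk, j+1)) = cellTrans (rk, j) * σ4 := by
    rw [hσ4, sfxAt]
    apply sfx_single D _ _ (up_keyGT _)
      (fun c h => lt_trans hkey_lt2 h) (rk, j) hrkj hkey_lt2 (lt_irrefl _)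
    intro y _ hP hQ
    have hP' := keyGT_coe'.mp hP
    have hQ' : ¬ ((rk:ℕ) < (y.1:ℕ) ∨ ((rk:ℕ) = (y.1:ℕ) ∧ (y.2:ℕ) < (j:ℕ))) := by
      intro hcon; exact hQ (keyGT_coe'.mpr hcon)
    push_neg at hQ'
    push_cast at hP'
    refine cell_ext_coe ?_ ?_
    · show (y.1:ℕ) = (rk:ℕ)
      rcases hP' with hh | ⟨hh1, hh2⟩ <;> omega
    · show (y.2:ℕ) = (j:ℕ)
      rcases hP' with hh | ⟨hh1, hh2⟩ <;> omega
  have hlrk1 : letterC ((rk, j+1) : Cell) = n := by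
    apply PNat.coe_injective
    rw [letterC_coe' rk (j+1), hncoe]
    push_cast
    omega
  obtain ⟨hF5lt, hF5inv⟩ := fact_at_cell ht hrkj1
  rw [hlrk1] at hF5lt hF5inv
  have hsfx5 : sfxAt D (rk, j+1) = cellTrans (rk, j) * σ4 := e5
  have hct_n : cellTrans ((rk, j) : Cell) n = p0 := by
    rw [← hp0n, ← hlrk, cellTrans_apply_snd]
  have hσ5n : (sfxAt D (rk, j+1))⁻¹ n = Z := by
    rw [hsfx5, mul_inv_rev, Perm.mul_apply, cellTrans_inv, hct_n, hZ]
  -- σ4 X = n + 1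
  have hKeyGeiX : sfx D (keyGE (i, j)) X = n + 1 := by
    rw [eB, Perm.mul_apply, hσ1X, ← hlij, cellTrans_apply_fst, hlij]
  have hRowiX : sfx D (rowGE i) X = n + 1 := by
    rw [← hKeyGeiX]
    apply sfx_eval D _ _ (up_keyGE _)
    · intro c hc
      rcases keyGE_coe'.mp hc with hh | ⟨hh1, _⟩
      · exact rowGE_coe.mpr (le_of_lt hh)
      · exact rowGE_coe.mpr (le_of_eq hh1)
    · intro c hcD hP hQ
      rw [hKeyGeiX]
      have hP' := rowGE_coe.mp hP
      have hQ' : ¬ ((i:ℕ) < (c.1:ℕ) ∨ ((i:ℕ) = (c.1:ℕ) ∧ (c.2:ℕ) ≤ (j:ℕ))) := by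
        intro hcon; exact hQ (keyGE_coe'.mpr hcon)
      push_neg at hQ'
      have hc1 : (c.1:ℕ) = (i:ℕ) := le_antisymm hQ'.1 hP'
      have hc2 : (j:ℕ) < (c.2:ℕ) := by have := hQ'.2 hc1.symm; omega
      have hne : (c.2:ℕ) ≠ (j:ℕ) + 1 := by
        intro hcon
        apply h2
        have : c = ((i₀ + k.succPNat, j+1) : Cell) := by
          apply cell_ext_coe
          · rw [hc1, hi]
          · rw [hcon]; push_cast; ring
        rwa [this] at hcD
      apply cellTrans_fix'
      left
      push_cast
      omega
  have hσ4X : σ4 X = n + 1 := by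
    rw [hσ4, sfxAt, ← hRowiX]
    apply sfx_eval D _ _ (up_rowGE _)
    · intro c hc
      apply keyGT_coe'.mpr
      left
      have := rowGE_coe.mp hc
      omega
    · intro c hcD hP hQ
      rw [hRowiX]
      have hP' := keyGT_coe'.mp hP
      have hQ' : ¬ ((i:ℕ) ≤ (c.1:ℕ)) := fun hcon => hQ (rowGE_coe.mpr hcon)
      apply cellTrans_fix'
      right
      push_cast
      rcases hP' with hh | ⟨hh1, hh2⟩ <;> omega
  have hσ4X' : σ4⁻¹ (n+1) = X := by rw [← hσ4X]; simp
  have hσ5n1 : (sfxAt D (rk, j+1))⁻¹ (n+1) = X := by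
    rw [hsfx5, mul_inv_rev, Perm.mul_apply, cellTrans_inv]
    have : cellTrans ((rk, j) : Cell) (n+1) = n+1 := by
      apply cellTrans_fix'
      right
      show (rk:ℕ) + (j:ℕ) + 1 ≤ ((n+1:ℕ+):ℕ)
      push_cast
      omega
    rw [this, hσ4X']
  rw [hσ5n, hσ5n1] at hF5lt hF5inv
  -- bounds
  have hZbound : (i₀:ℕ) + k ≤ (Z:ℕ) := by
    by_contra hcon
    push_neg at hcon
    have hfix : σ4 Z = Z := by
      rw [hσ4, sfxAt]
      apply sfx_keyGT_fix
      show (Z:ℕ) < (rk:ℕ)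
      omega
    have : σ4 Z = p0 := by rw [hZ]; simp
    rw [hfix] at this
    rw [this] at hcon
    omega
  have hYbound : (i₀:ℕ) < (Y:ℕ) := by
    by_contra hcon
    push_neg at hcon
    have hfix : σ1 Y = Y := by
      rw [hσ1, sfxAt]
      apply sfx_keyGT_fix
      show (Y:ℕ) < (i:ℕ)
      omega
    rw [hσ1Y] at hfix
    have : ((n+1 : ℕ+):ℕ) = (Y:ℕ) := by rw [hfix]
    push_cast at this
    omega
  -- existence of the small pipe a
  have hwit : ∃ a : ℕ+, (a:ℕ) ≤ (i₀:ℕ) ∧ W a < W Y := by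
    by_contra hno
    push_neg at hno
    have hcell : ∀ t : ℕ, ∃ c : Cell, t < (i₀:ℕ) →
        c ∈ D ∧ (c.1:ℕ) < (i₀:ℕ) ∧ sfxAt D c Y = letterC c + 1 ∧
          (sfxAt D c)⁻¹ (letterC c) = (⟨t+1, Nat.succ_pos t⟩ : ℕ+) := by
      intro t
      by_cases htlt : t < (i₀:ℕ)
      swap
      · exact ⟨(1,1), fun h => absurd h htlt⟩
      set a : ℕ+ := (⟨t+1, Nat.succ_pos t⟩ : ℕ+) with ha
      have hacoe : (a:ℕ) = t + 1 := rfl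
      have haY : a < Y := by rw [← PNat.coe_lt_coe]; omega
      have hWa : W Y < W a := by
        have hle := hno a (by rw [hacoe]; omega)
        have hne2 : W a ≠ W Y := fun h => (ne_of_lt haY) (W.injective h)
        exact lt_of_le_of_ne hle (Ne.symm hne2)
      have hpr : ((a, Y) : ℕ+ × ℕ+) ∈ InvS W := ⟨haY, hWa⟩
      obtain ⟨c, hcD, hpr2⟩ := inv_realized ht hpr
      have hpra : (sfxAt D c)⁻¹ (letterC c) = a := (congrArg Prod.fst hpr2).symm
      have hprY : (sfxAt D c)⁻¹ (letterC c + 1) = Y := (congrArg Prod.snd hpr2).symm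
      have hcY : sfxAt D c Y = letterC c + 1 := by rw [← hprY]; simp
      have hlca : sfxAt D c a = letterC c := by rw [← hpra]; simp
      -- row of c is < i₀
      have hA : ¬ ((i₀:ℕ) < (c.1:ℕ)) := by
        intro hgt
        have hfix : sfxAt D c a = a := sfx_keyGT_fix (by omega)
        rw [hfix] at hlca
        have h9 : (a:ℕ) = (letterC c : ℕ) := congrArg (fun x : ℕ+ => (x:ℕ)) hlca
        rw [letterC_coe] at h9
        have := c.2.pos
        omega
      have hB : (c.1:ℕ) ≠ (i₀:ℕ) := by
        intro heq
        have hcompute : sfxAt D c Y = q + Nat.succPNat 0 := by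
          rw [sfxAt, ← INV0]
          apply sfx_eval D _ _ (up_rowGE _)
          · intro x hx
            have hx' := rowGE_coe.mp hx
            have : ((i₀ + Nat.succPNat 0 : ℕ+):ℕ) = (i₀:ℕ) + 1 := by
              push_cast [Nat.succPNat_coe]; omega
            apply keyGT_coe.mpr
            left
            omega
          · intro x hxD hP hQ
            rw [INV0]
            have hP' := keyGT_coe.mp hP
            have hQ' : ¬ ((i₀:ℕ) + 1 ≤ (x.1:ℕ)) := by
              intro hcon
              apply hQ
              apply rowGE_coe.mpr
              push_cast [Nat.succPNat_coe]
              omega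
            have hx1 : (x.1:ℕ) = (i₀:ℕ) := by
              rcases hP' with hh | ⟨hh1, hh2⟩ <;> omega
            have hxj : (x.2:ℕ) ≠ (j:ℕ) := by
              intro hcon
              apply h3
              have : x = ((i₀, j) : Cell) := cell_ext_coe hx1 hcon
              rwa [this] at hxD
            have hxj1 : (x.2:ℕ) ≠ (j:ℕ) + 1 := by
              intro hcon
              apply h4
              have : x = ((i₀, j+1) : Cell) := by
                apply cell_ext_coe hx1
                show (x.2:ℕ) = ((j+1 : ℕ+):ℕ)
                push_cast
                omega
              rwa [this] at hxD
            have huval : ((q + Nat.succPNat 0 : ℕ+):ℕ) = (i₀:ℕ) + (j:ℕ) := by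
              push_cast [Nat.succPNat_coe]
              omega
            apply cellTrans_fix'
            rw [huval]
            have := x.2.pos
            omega
        rw [hcY] at hcompute
        have h9 : ((letterC c + 1 : ℕ+):ℕ) = ((q + Nat.succPNat 0 : ℕ+):ℕ) :=
          congrArg (fun x : ℕ+ => (x:ℕ)) hcompute
        push_cast [letterC_coe, Nat.succPNat_coe] at h9
        have := c.2.pos
        have hcj : (c.2:ℕ) = (j:ℕ) := by omega
        apply h3
        have : c = ((i₀, j) : Cell) := cell_ext_coe heq hcj
        rwa [this] at hcD
      exact ⟨c, fun _ => ⟨hcD, by omega, hcY, hpra⟩⟩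
    choose F hF using hcell
    have hmap : ∀ t ∈ Finset.range (i₀:ℕ), ((F t).1:ℕ) - 1 ∈ Finset.range ((i₀:ℕ) - 1) := by
      intro t htr
      rw [Finset.mem_range] at htr ⊢
      have h' := (hF t htr).2.1
      have := (F t).1.pos
      omega
    obtain ⟨t, ht1, t', ht2, htne, hteq⟩ := Finset.exists_ne_map_eq_of_card_lt_of_maps_to
      (by rw [Finset.card_range, Finset.card_range]; omega) hmap
    rw [Finset.mem_range] at ht1 ht2
    obtain ⟨hcD, hrow, hcY, hpra⟩ := hF t ht1
    obtain ⟨hcD', hrow', hcY', hpra'⟩ := hF t' ht2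
    have hr1 : ((F t).1:ℕ) = ((F t').1:ℕ) := by
      have := (F t).1.pos
      have := (F t').1.pos
      omega
    have hcne : F t ≠ F t' := by
      intro h
      apply htne
      rw [h] at hpra
      rw [hpra] at hpra'
      have h9 : ((⟨t+1, Nat.succ_pos t⟩ : ℕ+):ℕ) = ((⟨t'+1, Nat.succ_pos t'⟩ : ℕ+):ℕ) :=
        congrArg (fun x : ℕ+ => (x:ℕ)) hpra'
      simpa using h9
    have hcol : ((F t).2:ℕ) ≠ ((F t').2:ℕ) := fun h => hcne (cell_ext_coe hr1 h)
    rcases lt_or_gt_of_ne hcol with hlt | hgt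
    · exact same_row_contra hcD hr1 hlt hcY hcY'
    · exact same_row_contra hcD' hr1.symm hgt hcY' hcY
  -- assemble the 1432 pattern
  obtain ⟨a, haI, haW⟩ := hwit
  refine ⟨a, Z, X, Y, ?_, ?_, ?_, ?_, ?_, ?_⟩
  · rw [← PNat.coe_lt_coe]; omega
  · exact hF5lt
  · exact hXY
  · exact haW
  · exact hXYinv.2
  · exact hF5inv.2


/-- if `w` avoids 1432 then no ladder move of positive order is applicable to
any pipe dream of `w`. -/
theorem no_nonsimple_ladder_move_of_avoids_1432 (w : Equiv.Perm ℕ+)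
    (hw : {x : ℕ+ | w x ≠ x}.Finite) (hav : Avoids1432 w)
    (D : Finset (ℕ+ × ℕ+)) (hD : IsPipeDream w D) (k : ℕ) (hk : 1 ≤ k) :
    ¬ ∃ D' : Finset (ℕ+ × ℕ+), LadderMove k D D' := by
  rintro ⟨D', i₀, j, h1, h2, h3, h4, h5, -⟩
  have ht : TightL (cellsL D) := by
    unfold TightL
    rw [length_cellsL, ← pdWord_eq_wp, hD.2]
    exact (hD.1).symm
  obtain ⟨a, b, c, d, hab, hbc, hcd, h1', h2', h3'⟩ := main_aux D ht i₀ j k hk h1 h2 h3 h4 h5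
  rw [← pdWord_eq_wp, hD.2] at h1' h2' h3'
  exact hav ⟨a, b, c, d, hab, hbc, hcd, h1', h2', h3'⟩
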